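/- Let 𝒜 = [Z, R₁, R₂] be a consistent bounded preference system on a finite set Z = {z₁,…,z_s} with minimal element z₁ and maximal element z₂, let p, q : Z → [0,1] be probability mass functions on Z, let ξ* be the maximal value of ξ over C, and let ε ∈ [0,1]. Then the infimum over u ∈ 𝒩^{ε·ξ*}_𝒜 of Σ_{ℓ=1}^{s} u(z_ℓ)·(p(z_ℓ) − q(z_ℓ)) equals the minimum over (v₁,…,v_s) ∈ C_{ε·ξ*} of Σ_{ℓ=1}^{s} v_ℓ·(p(z_ℓ) − q(z_ℓ)), and this minimum is attained. -/

import Mathlib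

open MeasureTheory
open scoped BigOperators

namespace GSD

/-- The strict part `P_R` of a binary relation `R`. -/
def strictPart {α : Type*} (R : α → α → Prop) (a b : α) : Prop := R a b ∧ ¬ R b a

/-- The indifference part `I_R` of a binary relation `R`. -/
def indiffPart {α : Type*} (R : α → α → Prop) (a b : α) : Prop := R a b ∧ R b a

/-- `[A, R1, R2]` is a preference system: `R1` is a preorder on `A` and `R2` is a preorder
on `R1` (i.e. a reflexive-transitive relation supported on pairs belonging to `R1`). -/
structure IsPrefSystem {A : Type*} (R1 : A → A → Prop) (R2 : A × A → A × A → Prop) : Prop where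
  refl1 : ∀ a, R1 a a
  trans1 : ∀ a b c, R1 a b → R1 b c → R1 a c
  sub2 : ∀ p q, R2 p q → R1 p.1 p.2 ∧ R1 q.1 q.2
  refl2 : ∀ p, R1 p.1 p.2 → R2 p p
  trans2 : ∀ p q r, R2 p q → R2 q r → R2 p r

/-- `u` is a representation of the preference system `[A, R1, R2]`. -/
def IsRepresentation {A : Type*} (R1 : A → A → Prop) (R2 : A × A → A × A → Prop)
    (u : A → ℝ) : Prop :=
  (∀ a b, R1 a b → (u b ≤ u a ∧ (u a = u b ↔ R1 b a))) ∧
  (∀ a b c d, R2 (a, b) (c, d) →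
    (u c - u d ≤ u a - u b ∧ (u a - u b = u c - u d ↔ R2 (c, d) (a, b))))

/-- A preference system is consistent if it admits a representation. -/
def Consistent {A : Type*} (R1 : A → A → Prop) (R2 : A × A → A × A → Prop) : Prop :=
  ∃ u, IsRepresentation R1 R2 u

/-- The preference system is bounded with minimal element `a0` and maximal element `a1`. -/
def Bounded {A : Type*} (R1 : A → A → Prop) (a0 a1 : A) : Prop :=
  (∀ a, R1 a1 a) ∧ (∀ a, R1 a a0) ∧ strictPart R1 a1 a0

/-- Membership in the normalized representation set `𝒩_𝒜`. -/
def NormRep {A : Type*} (R1 : A → A → Prop) (R2 : A × A → A × A → Prop) (a0 a1 : A)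
    (u : A → ℝ) : Prop :=
  IsRepresentation R1 R2 u ∧ u a0 = 0 ∧ u a1 = 1

/-- Membership in `𝒩^δ_𝒜`: normalized representations separating strict pairs by at least `δ`. -/
def NormRepDelta {A : Type*} (R1 : A → A → Prop) (R2 : A × A → A × A → Prop) (a0 a1 : A)
    (δ : ℝ) (u : A → ℝ) : Prop :=
  NormRep R1 R2 a0 a1 u ∧
  (∀ a b, strictPart R1 a b → δ ≤ u a - u b) ∧
  (∀ c d e f, strictPart R2 (c, d) (e, f) → δ ≤ u c - u d - u e + u f)

/-- The constraint set `C` of vectors `(v₁,…,v_s,ξ) ∈ [0,1]^{s+1}`. -/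
def ConstraintSet {s : ℕ} (R1 : Fin s → Fin s → Prop)
    (R2 : (Fin s × Fin s) → (Fin s × Fin s) → Prop) (a0 a1 : Fin s) :
    Set ((Fin s → ℝ) × ℝ) :=
  {w | (∀ i, w.1 i ∈ Set.Icc (0:ℝ) 1) ∧ w.2 ∈ Set.Icc (0:ℝ) 1 ∧
    w.1 a0 = 0 ∧ w.1 a1 = 1 ∧
    (∀ i j, indiffPart R1 i j → w.1 i = w.1 j) ∧
    (∀ i j, strictPart R1 i j → w.2 ≤ w.1 i - w.1 j) ∧
    (∀ k l r t, indiffPart R2 (k, l) (r, t) → w.1 k - w.1 l = w.1 r - w.1 t) ∧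
    (∀ k l r t, strictPart R2 (k, l) (r, t) → w.2 ≤ w.1 k - w.1 l - w.1 r + w.1 t)}

/-- The slice `C_{ξ₀}` of the constraint set at threshold `ξ₀`. -/
def ConstraintSetAt {s : ℕ} (R1 : Fin s → Fin s → Prop)
    (R2 : (Fin s × Fin s) → (Fin s × Fin s) → Prop) (a0 a1 : Fin s) (ξ0 : ℝ) :
    Set (Fin s → ℝ) :=
  {v | (v, ξ0) ∈ ConstraintSet R1 R2 a0 a1}

/-- `p` is a probability mass function on `Fin s` (with values in `[0,1]`). -/
def IsPMF {s : ℕ} (p : Fin s → ℝ) : Prop :=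
  (∀ i, p i ∈ Set.Icc (0:ℝ) 1) ∧ ∑ i, p i = 1

section Aux

variable {s : ℕ} {R1 : Fin s → Fin s → Prop}
  {R2 : (Fin s × Fin s) → (Fin s × Fin s) → Prop} {a0 a1 : Fin s}

/-- Build a `NormRepDelta` from constraint-style data with strictly positive gaps. -/
lemma normRepDelta_of {δ : ℝ} {v : Fin s → ℝ}
    (h0 : v a0 = 0) (h1 : v a1 = 1)
    (hind1 : ∀ i j, indiffPart R1 i j → v i = v j)
    (hstr1 : ∀ i j, strictPart R1 i j → δ ≤ v i - v j ∧ 0 < v i - v j)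
    (hind2 : ∀ k l r t, indiffPart R2 (k, l) (r, t) → v k - v l = v r - v t)
    (hstr2 : ∀ k l r t, strictPart R2 (k, l) (r, t) →
      δ ≤ v k - v l - v r + v t ∧ 0 < v k - v l - v r + v t) :
    NormRepDelta R1 R2 a0 a1 δ v := by
  refine ⟨⟨⟨?_, ?_⟩, h0, h1⟩, fun a b h => (hstr1 a b h).1,
    fun c d e f h => (hstr2 c d e f h).1⟩
  · intro a b hab
    by_cases hba : R1 b a
    · have he := hind1 a b ⟨hab, hba⟩
      exact ⟨le_of_eq he.symm, ⟨fun _ => hba, fun _ => he⟩⟩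
    · have h := hstr1 a b ⟨hab, hba⟩
      refine ⟨by linarith [h.2], ⟨fun he => absurd he (by intro hh; linarith [h.2]),
        fun hb => absurd hb hba⟩⟩
  · intro a b c d hab
    by_cases hba : R2 (c, d) (a, b)
    · have he := hind2 a b c d ⟨hab, hba⟩
      exact ⟨le_of_eq he.symm, ⟨fun _ => hba, fun _ => he⟩⟩
    · have h := hstr2 a b c d ⟨hab, hba⟩
      refine ⟨by linarith [h.2], ⟨fun he => absurd he (by intro hh; linarith [h.2]),
        fun hb => absurd hb hba⟩⟩

lemma mem_constraintSetAt_of_normRepDelta (hbd : Bounded R1 a0 a1) {δ : ℝ}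
    (hδ : δ ∈ Set.Icc (0:ℝ) 1) {u : Fin s → ℝ} (hu : NormRepDelta R1 R2 a0 a1 δ u) :
    u ∈ ConstraintSetAt R1 R2 a0 a1 δ := by
  obtain ⟨⟨⟨rep1, rep2⟩, h0, h1⟩, hs1, hs2⟩ := hu
  refine ⟨?_, hδ, h0, h1, fun i j h => (rep1 i j h.1).2.mpr h.2, hs1,
    fun k l r t h => (rep2 k l r t h.1).2.mpr h.2, hs2⟩
  intro i
  have hA := (rep1 a1 i (hbd.1 i)).1
  have hB := (rep1 i a0 (hbd.2.1 i)).1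
  constructor <;> [linarith; linarith]

lemma isClosed_constraintSetAt (ξ0 : ℝ) :
    IsClosed (ConstraintSetAt R1 R2 a0 a1 ξ0) := by
  by_cases hξ : ξ0 ∈ Set.Icc (0:ℝ) 1
  · have heq : ConstraintSetAt R1 R2 a0 a1 ξ0 =
        (⋂ i, (fun v : Fin s → ℝ => v i) ⁻¹' Set.Icc 0 1) ∩
        ({v : Fin s → ℝ | v a0 = 0} ∩ ({v : Fin s → ℝ | v a1 = 1} ∩
        ((⋂ i, ⋂ j, ⋂ (_ : indiffPart R1 i j), {v : Fin s → ℝ | v i = v j}) ∩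
        ((⋂ i, ⋂ j, ⋂ (_ : strictPart R1 i j), {v : Fin s → ℝ | ξ0 ≤ v i - v j}) ∩
        ((⋂ k, ⋂ l, ⋂ r, ⋂ t, ⋂ (_ : indiffPart R2 (k, l) (r, t)),
          {v : Fin s → ℝ | v k - v l = v r - v t}) ∩
        (⋂ k, ⋂ l, ⋂ r, ⋂ t, ⋂ (_ : strictPart R2 (k, l) (r, t)),
          {v : Fin s → ℝ | ξ0 ≤ v k - v l - v r + v t})))))) := by
      ext v
      simp only [ConstraintSetAt, ConstraintSet, Set.mem_setOf_eq, Set.mem_inter_iff,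
        Set.mem_iInter, Set.mem_preimage, hξ, true_and]
    rw [heq]
    apply IsClosed.inter
    · exact isClosed_iInter fun i => isClosed_Icc.preimage (continuous_apply i)
    apply IsClosed.inter
    · exact isClosed_eq (continuous_apply a0) continuous_const
    apply IsClosed.inter
    · exact isClosed_eq (continuous_apply a1) continuous_const
    apply IsClosed.inter
    · exact isClosed_iInter fun i => isClosed_iInter fun j => isClosed_iInter fun _ =>
        isClosed_eq (continuous_apply i) (continuous_apply j)
    apply IsClosed.inter
    · exact isClosed_iInter fun i => isClosed_iInter fun j => isClosed_iInter fun _ =>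
        isClosed_le continuous_const ((continuous_apply i).sub (continuous_apply j))
    apply IsClosed.inter
    · exact isClosed_iInter fun k => isClosed_iInter fun l => isClosed_iInter fun r =>
        isClosed_iInter fun t => isClosed_iInter fun _ =>
        isClosed_eq ((continuous_apply k).sub (continuous_apply l))
          ((continuous_apply r).sub (continuous_apply t))
    · exact isClosed_iInter fun k => isClosed_iInter fun l => isClosed_iInter fun r =>
        isClosed_iInter fun t => isClosed_iInter fun _ =>
        isClosed_le continuous_const
          ((((continuous_apply k).sub (continuous_apply l)).sub
            (continuous_apply r)).add (continuous_apply t))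
  · have heq : ConstraintSetAt R1 R2 a0 a1 ξ0 = ∅ :=
      Set.eq_empty_iff_forall_notMem.mpr fun v hv => hξ hv.2.1
    rw [heq]; exact isClosed_empty

end Aux

set_option maxHeartbeats 1000000 in
/-- Proposition 4 i): the (regularized) test statistic, an infimum over `𝒩^{ε·ξ*}_𝒜`,
equals the optimal value of the linear program over `C_{ε·ξ*}`, and this minimum is attained. -/
theorem stmt5 {s : ℕ} (R1 : Fin s → Fin s → Prop)
    (R2 : (Fin s × Fin s) → (Fin s × Fin s) → Prop) (a0 a1 : Fin s)
    (hps : IsPrefSystem R1 R2) (hcons : Consistent R1 R2) (hbd : Bounded R1 a0 a1)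
    (p q : Fin s → ℝ) (hp : IsPMF p) (hq : IsPMF q)
    (ξstar : ℝ) (hξ : IsGreatest {ξ | ∃ v, (v, ξ) ∈ ConstraintSet R1 R2 a0 a1} ξstar)
    (ε : ℝ) (hε : ε ∈ Set.Icc (0:ℝ) 1) :
    ∃ m : ℝ,
      IsLeast {x | ∃ v ∈ ConstraintSetAt R1 R2 a0 a1 (ε * ξstar),
          x = ∑ i, v i * (p i - q i)} m ∧
      sInf {x | ∃ u, NormRepDelta R1 R2 a0 a1 (ε * ξstar) u ∧
          x = ∑ i, u i * (p i - q i)} = m := by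
  classical
  set δ := ε * ξstar with hδdef
  obtain ⟨vstar, hvstarC⟩ := hξ.1
  obtain ⟨hvI, hξI, hv0, hv1, hvind1, hvstr1, hvind2, hvstr2⟩ := hvstarC
  have hξ0 : 0 ≤ ξstar := hξI.1
  have hξle1 : ξstar ≤ 1 := hξI.2
  -- ξstar is strictly positive
  obtain ⟨u, hu1, hu2⟩ := hcons
  have hlt : u a0 < u a1 := by
    rcases hu1 a1 a0 hbd.2.2.1 with ⟨hle, hiff⟩
    rcases lt_or_eq_of_le hle with h | h
    · exact h
    · exact absurd (hiff.mp h.symm) hbd.2.2.2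
  set d : ℝ := u a1 - u a0 with hd
  have hdpos : 0 < d := by simp only [hd]; linarith
  set w : Fin s → ℝ := fun i => (u i - u a0) / d with hwdef
  have hw0 : w a0 = 0 := by simp [hwdef]
  have hw1 : w a1 = 1 := by
    simp only [hwdef]
    rw [← hd]
    exact div_self hdpos.ne'
  have hwgap1 : ∀ x y : Fin s, w x - w y = (u x - u y) / d := by
    intro x y; simp only [hwdef]; ring
  have hwgap2 : ∀ k l r t : Fin s, w k - w l - w r + w t = (u k - u l - u r + u t) / d := by
    intro k l r t; simp only [hwdef]; ring
  have hwmem : ∀ i, w i ∈ Set.Icc (0:ℝ) 1 := by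
    intro i
    have hA := (hu1 a1 i (hbd.1 i)).1
    have hB := (hu1 i a0 (hbd.2.1 i)).1
    constructor
    · exact div_nonneg (by linarith) hdpos.le
    · rw [div_le_one hdpos, hd]; linarith
  have hwind1 : ∀ i j, indiffPart R1 i j → w i = w j := by
    intro i j h
    have he := (hu1 i j h.1).2.mpr h.2
    simp only [hwdef, he]
  have hustr1 : ∀ i j, strictPart R1 i j → u j < u i := by
    intro i j h
    rcases hu1 i j h.1 with ⟨hle, hiff⟩
    rcases lt_or_eq_of_le hle with hh | hh
    · exact hh
    · exact absurd (hiff.mp hh.symm) h.2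
  have hwstr1 : ∀ i j, strictPart R1 i j → 0 < w i - w j := by
    intro i j h
    rw [hwgap1]
    exact div_pos (by linarith [hustr1 i j h]) hdpos
  have hwind2 : ∀ k l r t, indiffPart R2 (k, l) (r, t) → w k - w l = w r - w t := by
    intro k l r t h
    have he := (hu2 k l r t h.1).2.mpr h.2
    rw [hwgap1, hwgap1, he]
  have hustr2 : ∀ k l r t, strictPart R2 (k, l) (r, t) → u r - u t < u k - u l := by
    intro k l r t h
    rcases hu2 k l r t h.1 with ⟨hle, hiff⟩
    rcases lt_or_eq_of_le hle with hh | hh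
    · exact hh
    · exact absurd (hiff.mp hh.symm) h.2
  have hwstr2 : ∀ k l r t, strictPart R2 (k, l) (r, t) → 0 < w k - w l - w r + w t := by
    intro k l r t h
    rw [hwgap2]
    exact div_pos (by linarith [hustr2 k l r t h]) hdpos
  have hne1 : (Finset.univ : Finset (Fin s × Fin s)).Nonempty := ⟨(a0, a0), Finset.mem_univ _⟩
  set f1 : Fin s × Fin s → ℝ :=
    fun pr => if strictPart R1 pr.1 pr.2 then w pr.1 - w pr.2 else 1 with hf1
  set ξ1 := Finset.univ.inf' hne1 f1 with hξ1def
  have hξ1pos : 0 < ξ1 := by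
    rw [hξ1def, Finset.lt_inf'_iff]
    intro pr _
    by_cases h : strictPart R1 pr.1 pr.2
    · simpa [hf1, h] using hwstr1 pr.1 pr.2 h
    · simp [hf1, h]
  have hξ1le : ∀ i j, strictPart R1 i j → ξ1 ≤ w i - w j := by
    intro i j h
    have h' := Finset.inf'_le f1 (Finset.mem_univ (i, j))
    rw [hξ1def]
    exact le_trans h' (le_of_eq (by simp [hf1, h]))
  have hne2 : (Finset.univ : Finset ((Fin s × Fin s) × (Fin s × Fin s))).Nonempty :=
    ⟨((a0, a0), (a0, a0)), Finset.mem_univ _⟩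
  set f2 : (Fin s × Fin s) × (Fin s × Fin s) → ℝ :=
    fun qr => if strictPart R2 qr.1 qr.2 then w qr.1.1 - w qr.1.2 - w qr.2.1 + w qr.2.2 else 1
    with hf2
  set ξ2 := Finset.univ.inf' hne2 f2 with hξ2def
  have hξ2pos : 0 < ξ2 := by
    rw [hξ2def, Finset.lt_inf'_iff]
    intro qr _
    by_cases h : strictPart R2 qr.1 qr.2
    · simpa [hf2, h] using hwstr2 qr.1.1 qr.1.2 qr.2.1 qr.2.2 h
    · simp [hf2, h]
  have hξ2le : ∀ k l r t, strictPart R2 (k, l) (r, t) → ξ2 ≤ w k - w l - w r + w t := by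
    intro k l r t h
    have h' := Finset.inf'_le f2 (Finset.mem_univ ((k, l), (r, t)))
    rw [hξ2def]
    exact le_trans h' (le_of_eq (by simp [hf2, h]))
  have hξ0'pos : (0:ℝ) < min (min ξ1 ξ2) 1 := lt_min (lt_min hξ1pos hξ2pos) one_pos
  have hwC : (w, min (min ξ1 ξ2) 1) ∈ ConstraintSet R1 R2 a0 a1 := by
    refine ⟨hwmem, ⟨hξ0'pos.le, min_le_right _ _⟩, hw0, hw1, hwind1, ?_, hwind2, ?_⟩
    · intro i j h
      exact le_trans (le_trans (min_le_left _ _) (min_le_left _ _)) (hξ1le i j h)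
    · intro k l r t h
      exact le_trans (le_trans (min_le_left _ _) (min_le_right _ _)) (hξ2le k l r t h)
  have hξpos : 0 < ξstar := lt_of_lt_of_le hξ0'pos (hξ.2 ⟨w, hwC⟩)
  have hδ0 : 0 ≤ δ := mul_nonneg hε.1 hξ0
  have hδξ : δ ≤ ξstar := mul_le_of_le_one_left hξ0 hε.2
  have hδIcc : δ ∈ Set.Icc (0:ℝ) 1 := ⟨hδ0, le_trans hδξ hξle1⟩
  have hvstarCδ : vstar ∈ ConstraintSetAt R1 R2 a0 a1 δ :=
    ⟨hvI, hδIcc, hv0, hv1, hvind1, fun i j h => le_trans hδξ (hvstr1 i j h), hvind2,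
      fun k l r t h => le_trans hδξ (hvstr2 k l r t h)⟩
  have hvstarN : NormRepDelta R1 R2 a0 a1 δ vstar :=
    normRepDelta_of hv0 hv1 hvind1
      (fun i j h => ⟨le_trans hδξ (hvstr1 i j h), lt_of_lt_of_le hξpos (hvstr1 i j h)⟩)
      hvind2
      (fun k l r t h =>
        ⟨le_trans hδξ (hvstr2 k l r t h), lt_of_lt_of_le hξpos (hvstr2 k l r t h)⟩)
  have hclosed := isClosed_constraintSetAt (R1 := R1) (R2 := R2) (a0 := a0) (a1 := a1) δ
  have hsub : ConstraintSetAt R1 R2 a0 a1 δ ⊆ Set.Icc (0 : Fin s → ℝ) 1 := by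
    intro v hv
    rw [Set.mem_Icc]
    exact ⟨fun i => (hv.1 i).1, fun i => (hv.1 i).2⟩
  have hcpt : IsCompact (ConstraintSetAt R1 R2 a0 a1 δ) :=
    IsCompact.of_isClosed_subset isCompact_Icc hclosed hsub
  have hcont : Continuous (fun v : Fin s → ℝ => ∑ i, v i * (p i - q i)) :=
    continuous_finset_sum _ fun i _ => (continuous_apply i).mul continuous_const
  obtain ⟨vmin, hvminCδ, hminOn⟩ :=
    hcpt.exists_isMinOn ⟨vstar, hvstarCδ⟩ hcont.continuousOn
  have hmin : ∀ v ∈ ConstraintSetAt R1 R2 a0 a1 δ,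
      (∑ i, vmin i * (p i - q i)) ≤ ∑ i, v i * (p i - q i) := fun v hv => hminOn hv
  refine ⟨∑ i, vmin i * (p i - q i), ⟨⟨vmin, hvminCδ, rfl⟩, ?_⟩, ?_⟩
  · rintro x ⟨v, hv, rfl⟩
    exact hmin v hv
  · have hMle : (∑ i, vmin i * (p i - q i)) ≤ ∑ i, vstar i * (p i - q i) :=
      hmin vstar hvstarCδ
    obtain ⟨hmI, -, hm0, hm1, hmind1, hmstr1, hmind2, hmstr2⟩ := hvminCδ
    have hm0' : vmin a0 = 0 := hm0
    have hm1' : vmin a1 = 1 := hm1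
    have hmind1' : ∀ i j, indiffPart R1 i j → vmin i = vmin j := hmind1
    have hmstr1' : ∀ i j, strictPart R1 i j → δ ≤ vmin i - vmin j := hmstr1
    have hmind2' : ∀ k l r t, indiffPart R2 (k, l) (r, t) → vmin k - vmin l = vmin r - vmin t :=
      hmind2
    have hmstr2' : ∀ k l r t, strictPart R2 (k, l) (r, t) →
        δ ≤ vmin k - vmin l - vmin r + vmin t := hmstr2
    have hv0' : vstar a0 = 0 := hv0
    have hv1' : vstar a1 = 1 := hv1
    have hvind1' : ∀ i j, indiffPart R1 i j → vstar i = vstar j := hvind1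
    have hvstr1' : ∀ i j, strictPart R1 i j → ξstar ≤ vstar i - vstar j := hvstr1
    have hvind2' : ∀ k l r t, indiffPart R2 (k, l) (r, t) →
        vstar k - vstar l = vstar r - vstar t := hvind2
    have hvstr2' : ∀ k l r t, strictPart R2 (k, l) (r, t) →
        ξstar ≤ vstar k - vstar l - vstar r + vstar t := hvstr2
    have hNne : {x | ∃ u', NormRepDelta R1 R2 a0 a1 δ u' ∧
        x = ∑ i, u' i * (p i - q i)}.Nonempty :=
      ⟨∑ i, vstar i * (p i - q i), vstar, hvstarN, rfl⟩
    refine IsGLB.csInf_eq ⟨?_, ?_⟩ hNne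
    · rintro x ⟨u', hu', rfl⟩
      exact hmin u' (mem_constraintSetAt_of_normRepDelta hbd hδIcc hu')
    · intro b hb
      refine le_of_forall_pos_le_add ?_
      intro η hη
      obtain ⟨t, htpos, ht1, htD⟩ : ∃ t : ℝ, 0 < t ∧ t ≤ 1 ∧
          t * ((∑ i, vstar i * (p i - q i)) - ∑ i, vmin i * (p i - q i)) < η := by
        set D : ℝ := (∑ i, vstar i * (p i - q i)) - ∑ i, vmin i * (p i - q i) with hD
        have hD0 : 0 ≤ D := by rw [hD]; linarith
        refine ⟨min 1 (η / (D + 1)), lt_min one_pos (div_pos hη (by linarith)),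
          min_le_left _ _, ?_⟩
        have h1 : min 1 (η / (D + 1)) * D ≤ (η / (D + 1)) * D :=
          mul_le_mul_of_nonneg_right (min_le_right _ _) hD0
        have h2 : (η / (D + 1)) * D < η := by
          rw [div_mul_eq_mul_div, div_lt_iff₀ (by linarith : (0:ℝ) < D + 1)]
          nlinarith
        linarith
      have hutN : NormRepDelta R1 R2 a0 a1 δ (fun i => (1 - t) * vmin i + t * vstar i) := by
        apply normRepDelta_of
        · show (1 - t) * vmin a0 + t * vstar a0 = 0
          rw [hm0', hv0']; ring
        · show (1 - t) * vmin a1 + t * vstar a1 = 1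
          rw [hm1', hv1']; ring
        · intro i j h
          show (1 - t) * vmin i + t * vstar i = (1 - t) * vmin j + t * vstar j
          rw [hmind1' i j h, hvind1' i j h]
        · intro i j h
          show δ ≤ (1 - t) * vmin i + t * vstar i - ((1 - t) * vmin j + t * vstar j) ∧
            0 < (1 - t) * vmin i + t * vstar i - ((1 - t) * vmin j + t * vstar j)
          have hA := hmstr1' i j h
          have hB := hvstr1' i j h
          have p1 : (1 - t) * δ ≤ (1 - t) * (vmin i - vmin j) :=
            mul_le_mul_of_nonneg_left hA (by linarith)
          have p2 : t * ξstar ≤ t * (vstar i - vstar j) :=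
            mul_le_mul_of_nonneg_left hB htpos.le
          have p3 : 0 ≤ t * (ξstar - δ) := mul_nonneg htpos.le (by linarith)
          have p4 : 0 < t * ξstar := mul_pos htpos hξpos
          have p5 : 0 ≤ (1 - t) * δ := mul_nonneg (by linarith) hδ0
          constructor <;> nlinarith [p1, p2, p3, p4, p5]
        · intro k l r t' h
          have e1 := hmind2' k l r t' h
          have e2 := hvind2' k l r t' h
          show (1 - t) * vmin k + t * vstar k - ((1 - t) * vmin l + t * vstar l) =
            (1 - t) * vmin r + t * vstar r - ((1 - t) * vmin t' + t * vstar t')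
          nlinarith [e1, e2]
        · intro k l r t' h
          show δ ≤ (1 - t) * vmin k + t * vstar k - ((1 - t) * vmin l + t * vstar l) -
              ((1 - t) * vmin r + t * vstar r) + ((1 - t) * vmin t' + t * vstar t') ∧
            0 < (1 - t) * vmin k + t * vstar k - ((1 - t) * vmin l + t * vstar l) -
              ((1 - t) * vmin r + t * vstar r) + ((1 - t) * vmin t' + t * vstar t')
          have hA := hmstr2' k l r t' h
          have hB := hvstr2' k l r t' h
          have p1 : (1 - t) * δ ≤ (1 - t) * (vmin k - vmin l - vmin r + vmin t') :=
            mul_le_mul_of_nonneg_left hA (by linarith)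
          have p2 : t * ξstar ≤ t * (vstar k - vstar l - vstar r + vstar t') :=
            mul_le_mul_of_nonneg_left hB htpos.le
          have p3 : 0 ≤ t * (ξstar - δ) := mul_nonneg htpos.le (by linarith)
          have p4 : 0 < t * ξstar := mul_pos htpos hξpos
          have p5 : 0 ≤ (1 - t) * δ := mul_nonneg (by linarith) hδ0
          constructor <;> nlinarith [p1, p2, p3, p4, p5]
      have hsum : (∑ i, ((1 - t) * vmin i + t * vstar i) * (p i - q i)) =
          (1 - t) * (∑ i, vmin i * (p i - q i)) + t * (∑ i, vstar i * (p i - q i)) := by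
        rw [Finset.mul_sum, Finset.mul_sum, ← Finset.sum_add_distrib]
        exact Finset.sum_congr rfl fun i _ => by ring
      have hbu : b ≤ ∑ i, ((1 - t) * vmin i + t * vstar i) * (p i - q i) :=
        hb ⟨fun i => (1 - t) * vmin i + t * vstar i, hutN, rfl⟩
      rw [hsum] at hbu
      nlinarith [hbu, htD]


end GSD
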